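/- arXiv:2502.19744 — 2 statements merged into one kernel-verified Lean document; each statement's English description precedes it below -/
import Mathlib

section
/- For every profile of matroid rank hospital valuations and strict complete doctor preference orders, the HWSD-optimal allocation is stable. -/
open Finset

/-- A matroid rank function on subsets of a finite ground set. -/
def IsMRF {α : Type*} [DecidableEq α] (v : Finset α → ℤ) : Prop :=
  v ∅ = 0 ∧
  (∀ (S : Finset α) (d : α), d ∉ S →
    v (insert d S) - v S = 0 ∨ v (insert d S) - v S = 1) ∧
  (∀ (S T : Finset α) (d : α), S ⊆ T → d ∉ T →
    v (insert d T) - v T ≤ v (insert d S) - v S)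

/-- The bundle of doctors assigned to hospital `h` under allocation `X`. -/
def bundle {n m : ℕ} (X : Fin m → Option (Fin n)) (h : Fin n) : Finset (Fin m) :=
  Finset.univ.filter (fun d => X d = some h)

/-- An allocation is non-redundant if every hospital's bundle is independent. -/
def NonRedundant {n m : ℕ} (v : Fin n → Finset (Fin m) → ℤ)
    (X : Fin m → Option (Fin n)) : Prop :=
  ∀ h, v h (bundle X h) = (bundle X h).card

/-- Hospital utilitarian welfare. -/
def USW {n m : ℕ} (v : Fin n → Finset (Fin m) → ℤ) (X : Fin m → Option (Fin n)) : ℤ :=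
  ∑ h, v h (bundle X h)

/-- Doctor `d` strictly prefers the first outcome to the second; every hospital is
strictly preferred to being unallocated (`none`). -/
def OptStrictPref {n m : ℕ} (P : Fin m → Fin n → Fin n → Prop) (d : Fin m) :
    Option (Fin n) → Option (Fin n) → Prop
  | some h, some h' => P d h h'
  | some _, none => True
  | none, _ => False

/-- `(h, S)` is a blocking pair for `X`. -/
def IsBlockingPair {n m : ℕ} (v : Fin n → Finset (Fin m) → ℤ)
    (P : Fin m → Fin n → Fin n → Prop) (X : Fin m → Option (Fin n))
    (h : Fin n) (S : Finset (Fin m)) : Prop :=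
  v h S = S.card ∧ v h (bundle X h) < v h S ∧
    ∀ d ∈ S, X d = some h ∨ OptStrictPref P d (some h) (X d)

/-- An allocation is stable if it is non-redundant and admits no blocking pair. -/
def Stable {n m : ℕ} (v : Fin n → Finset (Fin m) → ℤ)
    (P : Fin m → Fin n → Fin n → Prop) (X : Fin m → Option (Fin n)) : Prop :=
  NonRedundant v X ∧ ¬ ∃ h S, IsBlockingPair v P X h S

/-- The HWSD ordering on non-redundant allocations: `X` beats `Y`. -/
def HWSDgt {n m : ℕ} (v : Fin n → Finset (Fin m) → ℤ)
    (P : Fin m → Fin n → Fin n → Prop) (X Y : Fin m → Option (Fin n)) : Prop :=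
  USW v Y < USW v X ∨
  (USW v X = USW v Y ∧ ∃ j : Fin m,
    OptStrictPref P j (X j) (Y j) ∧ ∀ k : Fin m, k < j → X k = Y k)

/-- `X` is the HWSD-optimal allocation: the greatest non-redundant allocation in the
HWSD ordering (the output of the High Welfare Serial Dictatorship mechanism). -/
def IsHWSDOpt {n m : ℕ} (v : Fin n → Finset (Fin m) → ℤ)
    (P : Fin m → Fin n → Fin n → Prop) (X : Fin m → Option (Fin n)) : Prop :=
  NonRedundant v X ∧ ∀ Y, NonRedundant v Y → Y ≠ X → HWSDgt v P X Y

section MRF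
variable {α : Type*} [DecidableEq α] {v : Finset α → ℤ}

lemma marg_nonneg (hv : IsMRF v) {S : Finset α} {d : α} (hd : d ∉ S) :
    v S ≤ v (insert d S) := by
  rcases hv.2.1 S d hd with h | h <;> omega

lemma marg_le_one (hv : IsMRF v) {S : Finset α} {d : α} (hd : d ∉ S) :
    v (insert d S) ≤ v S + 1 := by
  rcases hv.2.1 S d hd with h | h <;> omega

lemma mrf_mono_union (hv : IsMRF v) (S U : Finset α) : v S ≤ v (S ∪ U) := by
  induction U using Finset.induction_on with
  | empty => simp
  | @insert a U ha ih =>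
    by_cases h : a ∈ S ∪ U
    · rw [Finset.union_insert, Finset.insert_eq_self.mpr h]; exact ih
    · rw [Finset.union_insert]
      exact ih.trans (marg_nonneg hv h)

lemma mrf_mono (hv : IsMRF v) {S T : Finset α} (hST : S ⊆ T) : v S ≤ v T := by
  have := mrf_mono_union hv S T
  rwa [Finset.union_eq_right.mpr hST] at this

lemma mrf_le_card (hv : IsMRF v) (T : Finset α) : v T ≤ T.card := by
  induction T using Finset.induction_on with
  | empty => simp [hv.1]
  | @insert a T ha ih =>
    have h1 := marg_le_one hv ha
    rw [Finset.card_insert_of_notMem ha]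
    push_cast
    omega

lemma mrf_erase_ge (hv : IsMRF v) {B : Finset α} {d : α} (hd : d ∈ B) :
    v B - 1 ≤ v (B.erase d) := by
  have h1 : v (insert d (B.erase d)) ≤ v (B.erase d) + 1 :=
    marg_le_one hv (Finset.notMem_erase d B)
  rw [Finset.insert_erase hd] at h1
  omega

lemma mrf_union_zero (hv : IsMRF v) (T U : Finset α)
    (h : ∀ d ∈ U, d ∉ T → v (insert d T) = v T) : v (T ∪ U) = v T := by
  induction U using Finset.induction_on with
  | empty => simp
  | @insert a U ha ih =>
    have ih' := ih (fun e he heT => h e (Finset.mem_insert_of_mem he) heT)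
    by_cases hmem : a ∈ T ∪ U
    · rw [Finset.union_insert, Finset.insert_eq_self.mpr hmem, ih']
    · have haT : a ∉ T := fun h' => hmem (Finset.mem_union_left _ h')
      have h0 : v (insert a T) = v T := h a (Finset.mem_insert_self a U) haT
      have hle := hv.2.2 T (T ∪ U) a Finset.subset_union_left hmem
      have hge : v (T ∪ U) ≤ v (insert a (T ∪ U)) := marg_nonneg hv hmem
      rw [Finset.union_insert]
      omega

lemma mrf_exchange (hv : IsMRF v) {S T : Finset α}
    (hS : v S = S.card) (hlt : v T < v S) :
    ∃ d ∈ S, d ∉ T ∧ v (insert d T) = v T + 1 := by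
  by_contra hc
  push_neg at hc
  have hz : ∀ d ∈ S, d ∉ T → v (insert d T) = v T := by
    intro d hd hdT
    rcases hv.2.1 T d hdT with h | h
    · omega
    · exact absurd (by omega) (hc d hd hdT)
  have h1 := mrf_union_zero hv T S hz
  have h2 : v S ≤ v (T ∪ S) := mrf_mono hv Finset.subset_union_right
  omega

end MRF

/-- The HWSD-optimal allocation is stable. -/
theorem hwsd_opt_stable {n m : ℕ} (v : Fin n → Finset (Fin m) → ℤ)
    (P : Fin m → Fin n → Fin n → Prop)
    (hv : ∀ h, IsMRF (v h)) (hP : ∀ d, IsStrictTotalOrder (Fin n) (P d))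
    (X : Fin m → Option (Fin n)) (hX : IsHWSDOpt v P X) :
    Stable v P X := by
  classical
  refine ⟨hX.1, ?_⟩
  rintro ⟨h, S, hS, hlt, hpref⟩
  obtain ⟨d, hdS, hdB, hmarg⟩ := mrf_exchange (hv h) hS hlt
  have hXd : X d ≠ some h := by
    intro hxd
    exact hdB (by simp [bundle, hxd])
  have hdpref : OptStrictPref P d (some h) (X d) := by
    rcases hpref d hdS with h' | h'
    · exact absurd h' hXd
    · exact h'
  set Y : Fin m → Option (Fin n) := fun e => if e = d then some h else X e with hYdef
  have hYd : Y d = some h := by simp [hYdef]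
  have hYe : ∀ e, e ≠ d → Y e = X e := fun e he => by simp [hYdef, he]
  have bYh : bundle Y h = insert d (bundle X h) := by
    ext e
    by_cases he : e = d
    · subst he; simp [bundle, hYd]
    · simp [bundle, hYe e he, he]
  have bYne : ∀ h', h' ≠ h → bundle Y h' = (bundle X h').erase d := by
    intro h' hne
    ext e
    by_cases he : e = d
    · subst he
      simp only [bundle, Finset.mem_filter, Finset.mem_univ, true_and, hYd,
        Finset.mem_erase, ne_eq, not_true_eq_false, false_and, Option.some.injEq,
        iff_false]
      exact fun hh => hne hh.symm
    · simp [bundle, hYe e he, he]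
  have nrY : NonRedundant v Y := by
    intro h'
    by_cases hne : h' = h
    · subst hne
      rw [bYh, hmarg, hX.1 h', Finset.card_insert_of_notMem hdB]
      push_cast
      ring
    · rw [bYne h' hne]
      by_cases hdB' : d ∈ bundle X h'
      · have h1 : v h' ((bundle X h').erase d) ≤ (((bundle X h').erase d).card : ℤ) :=
          mrf_le_card (hv h') _
        have h2 := mrf_erase_ge (hv h') hdB'
        have h3 := hX.1 h'
        have h4 : (((bundle X h').erase d).card : ℤ) = ((bundle X h').card : ℤ) - 1 :=
          Finset.cast_card_erase_of_mem hdB'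
        linarith
      · rw [Finset.erase_eq_of_notMem hdB']
        exact hX.1 h'
  have key : ∀ h', h' ≠ h → X d ≠ some h' → v h' (bundle Y h') = v h' (bundle X h') := by
    intro h' hne hxd'
    have hnm : d ∉ bundle X h' := by simp [bundle, hxd']
    rw [bYne h' hne, Finset.erase_eq_of_notMem hnm]
  have hUh : v h (bundle Y h) = v h (bundle X h) + 1 := by rw [bYh, hmarg]
  have hUSW : USW v X ≤ USW v Y := by
    unfold USW
    rw [← Finset.add_sum_erase _ (fun h' => v h' (bundle X h')) (Finset.mem_univ h),
        ← Finset.add_sum_erase _ (fun h' => v h' (bundle Y h')) (Finset.mem_univ h)]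
    rcases hxd : X d with _ | h0
    · have heq : ∑ h' ∈ Finset.univ.erase h, v h' (bundle Y h')
          = ∑ h' ∈ Finset.univ.erase h, v h' (bundle X h') :=
        Finset.sum_congr rfl fun h' hh' =>
          key h' (Finset.ne_of_mem_erase hh') (by simp [hxd])
      rw [heq]
      linarith
    · have hh0 : h0 ≠ h := fun e => hXd (by rw [hxd, e])
      have hm0 : h0 ∈ Finset.univ.erase h := Finset.mem_erase.mpr ⟨hh0, Finset.mem_univ h0⟩
      rw [← Finset.add_sum_erase _ (fun h' => v h' (bundle X h')) hm0,
          ← Finset.add_sum_erase _ (fun h' => v h' (bundle Y h')) hm0]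
      have heq : ∑ h' ∈ (Finset.univ.erase h).erase h0, v h' (bundle Y h')
          = ∑ h' ∈ (Finset.univ.erase h).erase h0, v h' (bundle X h') := by
        refine Finset.sum_congr rfl fun h' hh' => ?_
        have h1 := Finset.ne_of_mem_erase hh'
        have h2 := Finset.ne_of_mem_erase (Finset.mem_of_mem_erase hh')
        exact key h' h2 (by simp [hxd]; exact fun e => h1 e.symm)
      have hd0 : d ∈ bundle X h0 := by simp [bundle, hxd]
      have hb0 : v h0 (bundle X h0) - 1 ≤ v h0 (bundle Y h0) := by
        rw [bYne h0 hh0]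
        exact mrf_erase_ge (hv h0) hd0
      rw [heq]
      linarith
  have hneq : Y ≠ X := by
    intro he
    exact hXd (by rw [← congrFun he d, hYd])
  rcases hX.2 Y nrY hneq with hlt' | ⟨_, j, hj, _⟩
  · exact absurd hlt' (not_lt.mpr hUSW)
  · by_cases hjd : j = d
    · subst hjd
      rw [hYd] at hj
      rcases hxj : X j with _ | h'
      · rw [hxj] at hj
        exact hj
      · rw [hxj] at hj
        rw [hxj] at hdpref
        have hj' : P j h' h := hj
        have hd2 : P j h h' := hdpref
        haveI := hP j
        exact irrefl_of (P j) h' (trans_of (P j) hj' hd2)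
    · rw [hYe j hjd] at hj
      rcases hxj : X j with _ | h'
      · rw [hxj] at hj
        exact hj
      · rw [hxj] at hj
        have hj' : P j h' h' := hj
        haveI := hP j
        exact irrefl_of (P j) h' hj'
end

section
/- The HWSD mechanism is hospital-strategyproof for binary capped additive valuations: suppose all hospitals have binary capped additive valuations and doctors have strict complete preference orders, and let X be the HWSD-optimal allocation for the true profile. For any hospital h and any binary capped additive valuation v', let Y be the HWSD-optimal allocation for the profile in which v_h is replaced by v' (all else unchanged). Then v_h(Y_h) ≤ v_h(X_h). -/
open Finset

/-- A binary capped additive valuation. -/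
def IsBinaryCappedAdditive {α : Type*} (v : Finset α → ℤ) : Prop :=
  ∃ (b : ℕ) (w : α → ℤ), 0 < b ∧ (∀ d, w d = 0 ∨ w d = 1) ∧
    ∀ S : Finset α, v S = min (b : ℤ) (∑ d ∈ S, w d)

section aux
variable {n m : ℕ}

lemma mem_bundle {X : Fin m → Option (Fin n)} {g : Fin n} {d : Fin m} :
    d ∈ bundle X g ↔ X d = some g := by simp [bundle]

lemma bundle_update_eq (V : Fin m → Option (Fin n)) (d0 : Fin m) (g : Fin n) :
    bundle (Function.update V d0 (some g)) g = insert d0 (bundle V g) := by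
  ext d; by_cases hd : d = d0 <;> simp [mem_bundle, Function.update, hd]

lemma bundle_update_ne (V : Fin m → Option (Fin n)) (d0 : Fin m) (o : Option (Fin n)) (g : Fin n)
    (ho : o ≠ some g) : bundle (Function.update V d0 o) g = (bundle V g).erase d0 := by
  ext d; by_cases hd : d = d0 <;> simp [mem_bundle, Function.update, hd, ho]

lemma sum_binary_eq (w : Fin m → ℤ) (hw : ∀ d, w d = 0 ∨ w d = 1) (S : Finset (Fin m)) :
    ∑ d ∈ S, w d = ((S.filter (fun d => w d = 1)).card : ℤ) := by
  rw [← Finset.sum_filter_add_sum_filter_not S (fun d => w d = 1)]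
  rw [Finset.sum_congr rfl (fun d hd => (Finset.mem_filter.1 hd).2)]
  have h2 : ∑ d ∈ S.filter (fun d => ¬ w d = 1), w d = 0 :=
    Finset.sum_eq_zero (fun d hd => (hw d).resolve_right (Finset.mem_filter.1 hd).2)
  simp [h2]

lemma capped_eq_card_iff (b : ℕ) (w : Fin m → ℤ) (hw : ∀ d, w d = 0 ∨ w d = 1)
    (S : Finset (Fin m)) :
    min (b : ℤ) (∑ d ∈ S, w d) = S.card ↔ ((∀ d ∈ S, w d = 1) ∧ S.card ≤ b) := by
  rw [sum_binary_eq w hw]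
  have hle : (S.filter (fun d => w d = 1)).card ≤ S.card := card_le_card (filter_subset _ _)
  constructor
  · intro hmin
    have h1 : (S.filter (fun d => w d = 1)).card = S.card ∧ S.card ≤ b := by
      rcases le_total (b : ℤ) ((S.filter (fun d => w d = 1)).card : ℤ) with hc | hc
      · rw [min_eq_left hc] at hmin
        constructor <;> omega
      · rw [min_eq_right hc] at hmin
        constructor <;> omega
    refine ⟨?_, h1.2⟩
    have := Finset.eq_of_subset_of_card_le (filter_subset (fun d => w d = 1) S) (le_of_eq h1.1.symm)
    intro d hd
    rw [← this] at hd
    exact (Finset.mem_filter.1 hd).2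
  · rintro ⟨hws, hcard⟩
    rw [Finset.filter_true_of_mem hws]
    exact min_eq_right (by exact_mod_cast hcard)

lemma usw_eq_assigned (v : Fin n → Finset (Fin m) → ℤ) (V : Fin m → Option (Fin n))
    (hV : NonRedundant v V) :
    USW v V = ((univ.filter (fun d => V d ≠ none)).card : ℤ) := by
  unfold USW
  rw [Finset.sum_congr rfl (fun g _ => hV g), ← Nat.cast_sum]
  congr 1
  have h1 : (univ.filter (fun d => V d ≠ none)) = univ.biUnion (fun g => bundle V g) := by
    ext d
    simp only [mem_filter, mem_univ, true_and, mem_biUnion, mem_bundle]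
    constructor
    · intro hd
      rcases Option.ne_none_iff_exists.1 hd with ⟨g, hg⟩
      exact ⟨g, hg.symm⟩
    · rintro ⟨g, hg⟩; simp [hg]
  rw [h1, Finset.card_biUnion]
  intro a _ b _ hab
  simp only [Function.onFun]
  rw [Finset.disjoint_left]
  intro d hd hd'
  rw [mem_bundle] at hd hd'
  rw [hd] at hd'
  exact hab (by injection hd')

end aux

section opt
variable {n m : ℕ} {v : Fin n → Finset (Fin m) → ℤ} {P : Fin m → Fin n → Fin n → Prop}

lemma lex_least (hP : ∀ d, IsStrictTotalOrder (Fin n) (P d))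
    {V Z : Fin m → Option (Fin n)} (hOpt : IsHWSDOpt v P V) (hZ : NonRedundant v Z)
    (hne : Z ≠ V) (hU : USW v Z = USW v V) :
    ∃ j, V j ≠ Z j ∧ (∀ k, k < j → V k = Z k) ∧ OptStrictPref P j (V j) (Z j) := by
  rcases hOpt.2 Z hZ hne with hlt | ⟨-, j, hpref, hagree⟩
  · omega
  refine ⟨j, ?_, hagree, hpref⟩
  intro heq
  rw [heq] at hpref
  haveI := hP j
  cases hZj : Z j with
  | none => rw [hZj] at hpref; exact hpref
  | some a => rw [hZj] at hpref; exact irrefl_of (P j) a hpref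

lemma augment_contra {V : Fin m → Option (Fin n)} (hOpt : IsHWSDOpt v P V)
    {Z : Fin m → Option (Fin n)} (hZ : NonRedundant v Z)
    (hsub : ∀ d, V d ≠ none → Z d ≠ none) {d0 : Fin m}
    (h0 : V d0 = none) (h1 : Z d0 ≠ none) : False := by
  have hne : Z ≠ V := by
    intro he; rw [he] at h1; exact h1 h0
  have hU : USW v V < USW v Z := by
    rw [usw_eq_assigned v V hOpt.1, usw_eq_assigned v Z hZ]
    have hss : univ.filter (fun d => V d ≠ none) ⊂ univ.filter (fun d => Z d ≠ none) := by
      refine Finset.ssubset_iff_of_subset ?_ |>.2 ?_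
      · intro d hd
        simp only [mem_filter, mem_univ, true_and] at hd ⊢
        exact hsub d hd
      · exact ⟨d0, by simp [h1], by simp [h0]⟩
    exact_mod_cast card_lt_card hss
  rcases hOpt.2 Z hZ hne with hlt | ⟨heq, -⟩ <;> omega

end opt

section aux2
variable {α : Type*} [DecidableEq α]

lemma card_insert_inter_of_mem {e : α} {s T : Finset α} (hs : e ∉ s) (hT : e ∈ T) :
    ((insert e s) ∩ T).card = (s ∩ T).card + 1 := by
  rw [Finset.insert_inter_of_mem hT,
    card_insert_of_notMem (fun hc => hs (mem_of_mem_inter_left hc))]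

lemma card_insert_inter_of_not_mem {e : α} {s T : Finset α} (hT : e ∉ T) :
    ((insert e s) ∩ T).card = (s ∩ T).card := by
  rw [Finset.insert_inter_of_notMem hT]

lemma exists_not_mem_of_card_lt {used S : Finset α}
    (hc : (used ∩ S).card < S.card) : ∃ e ∈ S, e ∉ used := by
  by_contra hno
  push_neg at hno
  have hS : S ⊆ used := hno
  rw [Finset.inter_eq_right.2 hS] at hc
  exact lt_irrefl _ hc

end aux2

section master
variable {n m : ℕ} {v : Fin n → Finset (Fin m) → ℤ} {P : Fin m → Fin n → Fin n → Prop}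
  {h : Fin n} {v' : Finset (Fin m) → ℤ} {X Y : Fin m → Option (Fin n)}
  {b : Fin n → ℕ} {w : Fin n → Fin m → ℤ} {b' : ℕ} {w' : Fin m → ℤ}

lemma master
    (hP : ∀ d, IsStrictTotalOrder (Fin n) (P d))
    (hw : ∀ g d, w g d = 0 ∨ w g d = 1)
    (hcap : ∀ g S, v g S = min (b g : ℤ) (∑ d ∈ S, w g d))
    (hw' : ∀ d, w' d = 0 ∨ w' d = 1)
    (hcap' : ∀ S, v' S = min (b' : ℤ) (∑ d ∈ S, w' d))
    (hX : IsHWSDOpt v P X) (hY : IsHWSDOpt (Function.update v h v') P Y)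
    (hroom : (bundle X h).card < b h)
    (hbig : (bundle X h).card < ((bundle Y h).filter (fun d => w h d = 1)).card) :
    False := by
  classical
  set pool : Finset (Fin m) := ((bundle Y h).filter (fun d => w h d = 1)) \ bundle X h with hpool
  have hvY : ∀ g, g ≠ h → Function.update v h v' g = v g :=
    fun g hg => Function.update_of_ne hg v' v
  have unNR : ∀ V : Fin m → Option (Fin n), NonRedundant v V →
      ∀ g, (∀ d ∈ bundle V g, w g d = 1) ∧ (bundle V g).card ≤ b g := by
    intro V hV g
    have := hV g
    rw [hcap] at this
    exact (capped_eq_card_iff _ _ (hw g) _).1 this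
  have mkNR : ∀ V : Fin m → Option (Fin n),
      (∀ g, (∀ d ∈ bundle V g, w g d = 1) ∧ (bundle V g).card ≤ b g) → NonRedundant v V := by
    intro V hV g
    rw [hcap]
    exact (capped_eq_card_iff _ _ (hw g) _).2 (hV g)
  have hXch := unNR X hX.1
  have hYchh : (∀ d ∈ bundle Y h, w' d = 1) ∧ (bundle Y h).card ≤ b' := by
    have := hY.1 h
    rw [Function.update_self, hcap'] at this
    exact (capped_eq_card_iff _ _ hw' _).1 this
  have hYch : ∀ g, g ≠ h → (∀ d ∈ bundle Y g, w g d = 1) ∧ (bundle Y g).card ≤ b g := by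
    intro g hg
    have := hY.1 g
    rw [hvY g hg, hcap] at this
    exact (capped_eq_card_iff _ _ (hw g) _).1 this
  have pool_mem : ∀ e ∈ pool, Y e = some h ∧ w h e = 1 ∧ e ∉ bundle X h := by
    intro e he
    rw [hpool, mem_sdiff, mem_filter] at he
    exact ⟨mem_bundle.1 he.1.1, he.1.2, he.2⟩
  have pool_card : (bundle X h).card < pool.card + (bundle X h ∩ bundle Y h).card := by
    have c5 : (((bundle Y h).filter (fun d => w h d = 1)) \ bundle X h).card
        + (((bundle Y h).filter (fun d => w h d = 1)) ∩ bundle X h).card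
        = ((bundle Y h).filter (fun d => w h d = 1)).card := by
      rw [card_sdiff_add_card_inter]
    have c6 : (((bundle Y h).filter (fun d => w h d = 1)) ∩ bundle X h).card
        ≤ (bundle X h ∩ bundle Y h).card := by
      apply card_le_card
      intro d hd
      rw [mem_inter] at hd ⊢
      exact ⟨hd.2, (mem_filter.1 hd.1).1⟩
    rw [hpool]
    omega
  have pool_assigned : ∀ e ∈ pool, X e ≠ none := by
    intro e he hnone
    obtain ⟨heY, hew, heX⟩ := pool_mem e he
    refine augment_contra hX (Z := Function.update X e (some h)) ?_ ?_ (d0 := e) hnone ?_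
    · apply mkNR
      intro g
      by_cases hg : g = h
      · rw [hg, bundle_update_eq]
        refine ⟨?_, ?_⟩
        · intro d hd
          rcases mem_insert.1 hd with hd | hd
          · rw [hd]; exact hew
          · exact (hXch h).1 d hd
        · rw [card_insert_of_notMem heX]; omega
      · rw [bundle_update_ne X e (some h) g (fun hc => hg (Option.some.inj hc).symm)]
        exact ⟨fun d hd => (hXch g).1 d (mem_of_mem_erase hd),
          le_trans card_erase_le (hXch g).2⟩
    · intro d hd
      by_cases hde : d = e
      · rw [hde]; simp [Function.update_self]
      · rw [Function.update_of_ne hde]; exact hd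
    · simp [Function.update_self]
  -- building a fresh one-step state departing from h
  have mkFresh : ∀ e'' ∈ pool, ∃ f'' : Fin n, X e'' = some f'' ∧ f'' ≠ h ∧
      NonRedundant v (Function.update X e'' (some h)) ∧
      (bundle (Function.update X e'' (some h)) f'').card + 1 ≤ b f'' ∧
      (∀ g, g ≠ f'' → Function.update v h v' g (bundle (Function.update Y e'' (some f'')) g)
        = ((bundle (Function.update Y e'' (some f'')) g).card : ℤ)) ∧
      ((∀ d ∈ bundle (Function.update Y e'' (some f'')) f'', w f'' d = 1) ∧
        (bundle (Function.update Y e'' (some f'')) f'').card ≤ (bundle Y f'').card + 1) ∧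
      (∀ g, g ≠ f'' → (bundle (Function.update Y e'' (some f'')) g).card ≤ (bundle Y g).card) := by
    intro e he
    obtain ⟨heY, hew, heX⟩ := pool_mem e he
    cases hXe : X e with
    | none => exact absurd hXe (pool_assigned e he)
    | some f =>
      have hfh : f ≠ h := by
        intro hc; rw [hc] at hXe; exact heX (mem_bundle.2 hXe)
      have heXf : e ∈ bundle X f := mem_bundle.2 hXe
      have heYf : ∀ g, g ≠ h → e ∉ bundle Y g := by
        intro g hg hc
        rw [mem_bundle, heY] at hc
        exact hg (Option.some.inj hc).symm
      refine ⟨f, rfl, hfh, ?_, ?_, ?_, ?_, ?_⟩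
      · apply mkNR
        intro g
        by_cases hg : g = h
        · rw [hg, bundle_update_eq]
          refine ⟨?_, ?_⟩
          · intro d hd
            rcases mem_insert.1 hd with hd | hd
            · rw [hd]; exact hew
            · exact (hXch h).1 d hd
          · rw [card_insert_of_notMem heX]; omega
        · rw [bundle_update_ne X e (some h) g (fun hc => hg (Option.some.inj hc).symm)]
          exact ⟨fun d hd => (hXch g).1 d (mem_of_mem_erase hd),
            le_trans card_erase_le (hXch g).2⟩
      · rw [bundle_update_ne X e (some h) f (fun hc => hfh (Option.some.inj hc).symm)]
        rw [card_erase_of_mem heXf]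
        have h1 : 1 ≤ (bundle X f).card := card_pos.2 ⟨e, heXf⟩
        have := (hXch f).2
        omega
      · intro g hg
        by_cases hgh : g = h
        · rw [hgh, bundle_update_ne Y e (some f) h (fun hc => hfh (Option.some.inj hc)),
            Function.update_self, hcap']
          apply (capped_eq_card_iff _ _ hw' _).2
          exact ⟨fun d hd => hYchh.1 d (mem_of_mem_erase hd),
            le_trans card_erase_le hYchh.2⟩
        · rw [bundle_update_ne Y e (some f) g (fun hc => hg (Option.some.inj hc).symm),
            erase_eq_of_notMem (heYf g hgh)]
          exact hY.1 g
      · rw [bundle_update_eq]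
        refine ⟨?_, ?_⟩
        · intro d hd
          rcases mem_insert.1 hd with hd | hd
          · rw [hd]; exact (hXch f).1 e heXf
          · exact (hYch f hfh).1 d hd
        · rw [card_insert_of_notMem (heYf f hfh)]
      · intro g hg
        by_cases hgh : g = h
        · rw [hgh, bundle_update_ne Y e (some f) h (fun hc => hfh (Option.some.inj hc))]
          exact card_erase_le
        · rw [bundle_update_ne Y e (some f) g (fun hc => hg (Option.some.inj hc).symm),
            erase_eq_of_notMem (heYf g hgh)]
  have loop : ∀ (N : ℕ) (used : Finset (Fin m)) (cur : Fin n) (E : Finset (Fin m))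
      (Zc Wc : Fin m → Option (Fin n)),
      (univ \ used).card = N → cur ≠ h → E.Nonempty → E ⊆ used →
      (∀ d, d ∉ E → Zc d = X d ∧ Wc d = Y d) →
      (∀ d ∈ E, ∃ a bb, X d = some a ∧ Y d = some bb ∧ Zc d = some bb ∧ Wc d = some a ∧ a ≠ bb) →
      NonRedundant v Zc →
      (bundle Zc cur).card + 1 ≤ b cur →
      (∀ g, g ≠ cur → Function.update v h v' g (bundle Wc g) = ((bundle Wc g).card : ℤ)) →
      ((∀ d ∈ bundle Wc cur, w cur d = 1) ∧ (bundle Wc cur).card ≤ (bundle Y cur).card + 1) →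
      (∀ g, g ≠ cur → (bundle Wc g).card ≤ (bundle Y g).card) →
      (∀ g, g ≠ h → g ≠ cur →
        (used ∩ (bundle Y g \ bundle X g)).card ≤ (used ∩ (bundle X g \ bundle Y g)).card) →
      ((used ∩ (bundle Y cur \ bundle X cur)).card < (used ∩ (bundle X cur \ bundle Y cur)).card) →
      ((used ∩ pool).card ≤ (used ∩ (bundle X h \ bundle Y h)).card + 1) →
      False := by
    intro N
    induction N using Nat.strong_induction_on with
    | _ N ih =>
    intro used cur E Zc Wc hN hcur hEne hEsub hoff hon hZnr hZcap hWnr hWcur hWcard K1 K2 K3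
    have hYcurch := hYch cur hcur
    -- step A : cur is full under Y
    have hfull : (bundle Y cur).card = b cur := by
      by_contra hnef
      have hltf : (bundle Y cur).card < b cur := lt_of_le_of_ne hYcurch.2 hnef
      have hWnr' : NonRedundant (Function.update v h v') Wc := by
        intro g
        by_cases hg : g = cur
        · rw [hg, hvY cur hcur, hcap]
          exact (capped_eq_card_iff _ _ (hw cur) _).2 ⟨hWcur.1, by omega⟩
        · exact hWnr g hg
      obtain ⟨d0, hd0⟩ := hEne
      obtain ⟨a0, b0, hXa0, hYb0, hZb0, hWa0, hab0⟩ := hon d0 hd0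
      have hWne : Wc ≠ Y := by
        intro he
        rw [he, hYb0] at hWa0
        exact hab0 (Option.some.inj hWa0).symm
      have hZne : Zc ≠ X := by
        intro he
        rw [he, hXa0] at hZb0
        exact hab0 (Option.some.inj hZb0)
      have hUW : USW (Function.update v h v') Wc = USW (Function.update v h v') Y := by
        rw [usw_eq_assigned _ _ hWnr', usw_eq_assigned _ _ hY.1]
        congr 2
        apply filter_congr
        intro d _
        by_cases hd : d ∈ E
        · obtain ⟨a, bb, hXa, hYb, hZb, hWa, hab⟩ := hon d hd
          simp [hWa, hYb]
        · rw [(hoff d hd).2]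
      have hUZ : USW v Zc = USW v X := by
        rw [usw_eq_assigned _ _ hZnr, usw_eq_assigned _ _ hX.1]
        congr 2
        apply filter_congr
        intro d _
        by_cases hd : d ∈ E
        · obtain ⟨a, bb, hXa, hYb, hZb, hWa, hab⟩ := hon d hd
          simp [hZb, hXa]
        · rw [(hoff d hd).1]
      obtain ⟨j2, hj2ne, hj2min, hj2pref⟩ := lex_least hP hY hWnr' hWne hUW
      obtain ⟨j1, hj1ne, hj1min, hj1pref⟩ := lex_least hP hX hZnr hZne hUZ
      have hj1E : j1 ∈ E := by
        by_contra hns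
        exact hj1ne (hoff j1 hns).1.symm
      have hj2E : j2 ∈ E := by
        by_contra hns
        exact hj2ne (hoff j2 hns).2.symm
      have hj12 : j1 = j2 := by
        by_contra hne12
        rcases lt_or_gt_of_ne hne12 with hlt12 | hlt12
        · obtain ⟨a, bb, hXa, hYb, hZb, hWa, hab⟩ := hon j1 hj1E
          have hmm := hj2min j1 hlt12
          rw [hYb, hWa] at hmm
          exact hab (Option.some.inj hmm).symm
        · obtain ⟨a, bb, hXa, hYb, hZb, hWa, hab⟩ := hon j2 hj2E
          have hmm := hj1min j2 hlt12
          rw [hXa, hZb] at hmm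
          exact hab (Option.some.inj hmm)
      rw [hj12] at hj1E hj1pref
      obtain ⟨a, bb, hXa, hYb, hZb, hWa, hab⟩ := hon j2 hj1E
      rw [hXa, hZb] at hj1pref
      rw [hYb, hWa] at hj2pref
      haveI := hP j2
      exact irrefl_of (P j2) a (trans_of (P j2) hj1pref hj2pref)
    -- step B : a fresh doctor
    have hcardXY : (bundle X cur \ bundle Y cur).card ≤ (bundle Y cur \ bundle X cur).card := by
      have e1 := card_sdiff_add_card_inter (bundle X cur) (bundle Y cur)
      have e2 := card_sdiff_add_card_inter (bundle Y cur) (bundle X cur)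
      have e3 : (bundle X cur ∩ bundle Y cur).card = (bundle Y cur ∩ bundle X cur).card := by
        rw [inter_comm]
      have e4 : (bundle X cur).card ≤ b cur := (hXch cur).2
      omega
    have hK2' : (used ∩ (bundle Y cur \ bundle X cur)).card
        < (bundle Y cur \ bundle X cur).card := by
      have hh := card_le_card (inter_subset_right (s₁ := used) (s₂ := bundle X cur \ bundle Y cur))
      omega
    obtain ⟨e', he'S, he'used⟩ := exists_not_mem_of_card_lt hK2'
    have he'Y : Y e' = some cur := mem_bundle.1 (mem_sdiff.1 he'S).1
    have he'Xc : e' ∉ bundle X cur := (mem_sdiff.1 he'S).2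
    have he'E : e' ∉ E := fun hc => he'used (hEsub hc)
    have he'Zc : Zc e' = X e' := (hoff e' he'E).1
    have he'Wc : Wc e' = Y e' := (hoff e' he'E).2
    have he'w : w cur e' = 1 := hYcurch.1 e' (mem_sdiff.1 he'S).1
    have he'Ybun : ∀ g, g ≠ cur → e' ∉ bundle Y g := by
      intro g hg hc
      rw [mem_bundle] at hc
      rw [he'Y] at hc
      exact hg (Option.some.inj hc).symm
    -- more membership helpers
    have he'Wbun : ∀ g, g ≠ cur → e' ∉ bundle Wc g := by
      intro g hg hc
      rw [mem_bundle] at hc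
      rw [he'Wc, he'Y] at hc
      exact hg (Option.some.inj hc).symm
    have he'Wcur : e' ∈ bundle Wc cur := mem_bundle.2 (he'Wc.trans he'Y)
    have he'pool : e' ∉ pool := by
      intro hc
      rw [hpool, mem_sdiff, mem_filter] at hc
      exact he'Ybun h (Ne.symm hcur) hc.1.1
    cases hXe' : X e' with
    | none =>
      have he'Znone : Zc e' = none := he'Zc.trans hXe'
      refine augment_contra hX (Z := Function.update Zc e' (some cur)) ?_ ?_ (d0 := e') hXe' ?_
      · apply mkNR
        intro g
        by_cases hg : g = cur
        · rw [hg, bundle_update_eq]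
          refine ⟨?_, ?_⟩
          · intro d hd
            rcases mem_insert.1 hd with hd | hd
            · rw [hd]; exact he'w
            · exact (unNR Zc hZnr cur).1 d hd
          · rw [card_insert_of_notMem (fun hc => by
              rw [mem_bundle, he'Znone] at hc; exact Option.some_ne_none _ hc.symm)]
            exact hZcap
        · rw [bundle_update_ne Zc e' (some cur) g (fun hc => hg (Option.some.inj hc).symm)]
          exact ⟨fun d hd => (unNR Zc hZnr g).1 d (mem_of_mem_erase hd),
            le_trans card_erase_le (unNR Zc hZnr g).2⟩
      · intro d hd
        by_cases hde : d = e'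
        · rw [hde] at hd; exact absurd hXe' hd
        · rw [Function.update_of_ne hde]
          by_cases hdE : d ∈ E
          · obtain ⟨a, bb, h1, h2, h3, h4, h5⟩ := hon d hdE
            rw [h3]; exact fun hc => Option.some_ne_none _ hc
          · rw [(hoff d hdE).1]; exact hd
      · simp [Function.update_self]
    | some f' =>
      have hf'cur : f' ≠ cur := by
        intro hc
        rw [hc] at hXe'
        exact he'Xc (mem_bundle.2 hXe')
      have he'Xf' : e' ∈ bundle X f' := mem_bundle.2 hXe'
      have he'Zc' : Zc e' = some f' := he'Zc.trans hXe'
      have he'Wc' : Wc e' = some cur := he'Wc.trans he'Y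
      have he'Zcf' : e' ∈ bundle Zc f' := mem_bundle.2 he'Zc'
      have he'Xbun : ∀ g, g ≠ f' → e' ∉ bundle X g := by
        intro g hg hc
        rw [mem_bundle] at hc
        rw [hXe'] at hc
        exact hg (Option.some.inj hc).symm
      have he'Zbun : ∀ g, g ≠ f' → e' ∉ bundle Zc g := by
        intro g hg hc
        rw [mem_bundle] at hc
        rw [he'Zc'] at hc
        exact hg (Option.some.inj hc).symm
      by_cases hf'h : f' = h
      · -- arrival at h : close the segment and reopen from the pool
        rw [hf'h] at hXe' he'Xf' he'Xbun
        have he'nYh : e' ∉ bundle Y h := he'Ybun h (Ne.symm hcur)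
        have he'XY : e' ∈ bundle X h \ bundle Y h := mem_sdiff.2 ⟨he'Xf', he'nYh⟩
        have hc1 : ((insert e' used) ∩ pool).card = (used ∩ pool).card :=
          card_insert_inter_of_not_mem he'pool
        have hc2 : ((insert e' used) ∩ (bundle X h \ bundle Y h)).card
            = (used ∩ (bundle X h \ bundle Y h)).card + 1 :=
          card_insert_inter_of_mem he'used he'XY
        have hc3 : ((insert e' used) ∩ (bundle X h \ bundle Y h)).card
            ≤ (bundle X h \ bundle Y h).card := card_le_card inter_subset_right
        have hc4 := card_sdiff_add_card_inter (bundle X h) (bundle Y h)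
        have hfreshpool : ((insert e' used) ∩ pool).card < pool.card := by omega
        obtain ⟨e'', he''pool, he''used⟩ := exists_not_mem_of_card_lt hfreshpool
        obtain ⟨f'', hXe'', hf''h, hZnr0, hZcap0, hWnr0, hWcur0, hWcard0⟩ := mkFresh e'' he''pool
        obtain ⟨he''Y, he''w, he''Xh⟩ := pool_mem e'' he''pool
        have he''Ybun : ∀ g, g ≠ h → e'' ∉ bundle Y g := by
          intro g hg hc
          rw [mem_bundle] at hc
          rw [he''Y] at hc
          exact hg (Option.some.inj hc).symm
        have he''Xbun : ∀ g, g ≠ f'' → e'' ∉ bundle X g := by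
          intro g hg hc
          rw [mem_bundle] at hc
          rw [hXe''] at hc
          exact hg (Option.some.inj hc).symm
        have he''Xf'' : e'' ∈ bundle X f'' := mem_bundle.2 hXe''
        have he''XY : e'' ∈ bundle X f'' \ bundle Y f'' :=
          mem_sdiff.2 ⟨he''Xf'', he''Ybun f'' hf''h⟩
        have he''e' : e'' ∉ insert e' used := he''used
        refine ih (univ \ insert e'' (insert e' used)).card ?_ (insert e'' (insert e' used))
          f'' {e''} (Function.update X e'' (some h)) (Function.update Y e'' (some f''))
          rfl hf''h ⟨e'', mem_singleton_self _⟩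
          (singleton_subset_iff.2 (mem_insert_self _ _)) ?_ ?_ hZnr0 hZcap0 hWnr0 hWcur0
          hWcard0 ?_ ?_ ?_
        · -- fuel
          rw [← hN]
          apply card_lt_card
          refine (Finset.ssubset_iff_of_subset
            (sdiff_subset_sdiff (Finset.Subset.refl _) ?_)).2
            ⟨e', mem_sdiff.2 ⟨mem_univ _, he'used⟩, fun hc => (mem_sdiff.1 hc).2 ?_⟩
          · exact subset_trans (subset_insert _ _) (subset_insert _ _)
          · exact mem_insert_of_mem (mem_insert_self _ _)
        · -- hoff
          intro d hd
          have hde : d ≠ e'' := fun hc => hd (hc ▸ mem_singleton_self _)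
          rw [Function.update_of_ne hde, Function.update_of_ne hde]
          exact ⟨rfl, rfl⟩
        · -- hon
          intro d hd
          rw [mem_singleton] at hd
          refine ⟨f'', h, ?_, ?_, ?_, ?_, hf''h⟩
          · rw [hd]; exact hXe''
          · rw [hd]; exact he''Y
          · rw [hd, Function.update_self]
          · rw [hd, Function.update_self]
        · -- K1
          intro g hgh hgf
          have hYe'' : e'' ∉ bundle Y g \ bundle X g :=
            fun hc => he''Ybun g hgh (mem_sdiff.1 hc).1
          have hXe''g : e'' ∉ bundle X g \ bundle Y g :=
            fun hc => he''Xbun g hgf (mem_sdiff.1 hc).1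
          have hXe'g : e' ∉ bundle X g \ bundle Y g :=
            fun hc => he'Xbun g hgh (mem_sdiff.1 hc).1
          rw [card_insert_inter_of_not_mem hYe'', card_insert_inter_of_not_mem hXe''g,
            card_insert_inter_of_not_mem hXe'g]
          by_cases hg : g = cur
          · rw [hg, card_insert_inter_of_mem he'used he'S]
            have := K2
            omega
          · rw [card_insert_inter_of_not_mem
              (fun hc => he'Ybun g hg (mem_sdiff.1 hc).1)]
            exact K1 g hgh hg
        · -- K2
          have t1 : ((insert e'' (insert e' used)) ∩ (bundle Y f'' \ bundle X f'')).card
              = ((insert e' used) ∩ (bundle Y f'' \ bundle X f'')).card :=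
            card_insert_inter_of_not_mem (fun hc => he''Ybun f'' hf''h (mem_sdiff.1 hc).1)
          have t2 : ((insert e'' (insert e' used)) ∩ (bundle X f'' \ bundle Y f'')).card
              = ((insert e' used) ∩ (bundle X f'' \ bundle Y f'')).card + 1 :=
            card_insert_inter_of_mem he''used he''XY
          have t3 : ((insert e' used) ∩ (bundle X f'' \ bundle Y f'')).card
              = (used ∩ (bundle X f'' \ bundle Y f'')).card :=
            card_insert_inter_of_not_mem (fun hc => he'Xbun f'' hf''h (mem_sdiff.1 hc).1)
          by_cases hgf : f'' = cur
          · have t4 : ((insert e' used) ∩ (bundle Y f'' \ bundle X f'')).card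
                = (used ∩ (bundle Y f'' \ bundle X f'')).card + 1 :=
              card_insert_inter_of_mem he'used (by rw [hgf]; exact he'S)
            rw [← hgf] at K2
            omega
          · have t4 : ((insert e' used) ∩ (bundle Y f'' \ bundle X f'')).card
                = (used ∩ (bundle Y f'' \ bundle X f'')).card :=
              card_insert_inter_of_not_mem (fun hc => he'Ybun f'' hgf (mem_sdiff.1 hc).1)
            have := K1 f'' hf''h hgf
            omega
        · -- K3
          have s1 : ((insert e'' (insert e' used)) ∩ pool).card
              = ((insert e' used) ∩ pool).card + 1 :=
            card_insert_inter_of_mem he''used he''pool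
          have s2 : ((insert e'' (insert e' used)) ∩ (bundle X h \ bundle Y h)).card
              = ((insert e' used) ∩ (bundle X h \ bundle Y h)).card :=
            card_insert_inter_of_not_mem
              (fun hc => he''Xbun h (Ne.symm hf''h) (mem_sdiff.1 hc).1)
          omega
      · -- continue the walk : f' ≠ h
        refine ih (univ \ insert e' used).card ?_ (insert e' used) f' (insert e' E)
          (Function.update Zc e' (some cur)) (Function.update Wc e' (some f'))
          rfl hf'h ⟨e', mem_insert_self _ _⟩ (insert_subset_insert _ hEsub)
          ?_ ?_ ?_ ?_ ?_ ?_ ?_ ?_ ?_ ?_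
        · -- fuel
          rw [← hN]
          apply card_lt_card
          refine (Finset.ssubset_iff_of_subset
            (sdiff_subset_sdiff (Finset.Subset.refl _) (subset_insert _ _))).2
            ⟨e', mem_sdiff.2 ⟨mem_univ _, he'used⟩,
              fun hc => (mem_sdiff.1 hc).2 (mem_insert_self _ _)⟩
        · -- hoff
          intro d hd
          have hde : d ≠ e' := fun hc => hd (hc ▸ mem_insert_self _ _)
          have hdE : d ∉ E := fun hc => hd (mem_insert_of_mem hc)
          rw [Function.update_of_ne hde, Function.update_of_ne hde]
          exact hoff d hdE
        · -- hon
          intro d hd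
          rcases mem_insert.1 hd with hd | hd
          · refine ⟨f', cur, ?_, ?_, ?_, ?_, hf'cur⟩
            · rw [hd]; exact hXe'
            · rw [hd]; exact he'Y
            · rw [hd, Function.update_self]
            · rw [hd, Function.update_self]
          · have hde : d ≠ e' := fun hc => he'E (hc ▸ hd)
            obtain ⟨a, bb, h1, h2, h3, h4, h5⟩ := hon d hd
            exact ⟨a, bb, h1, h2, by rw [Function.update_of_ne hde]; exact h3,
              by rw [Function.update_of_ne hde]; exact h4, h5⟩
        · -- NonRedundant Zc'
          apply mkNR
          intro g
          by_cases hg : g = cur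
          · rw [hg, bundle_update_eq]
            refine ⟨?_, ?_⟩
            · intro d hd
              rcases mem_insert.1 hd with hd | hd
              · rw [hd]; exact he'w
              · exact (unNR Zc hZnr cur).1 d hd
            · rw [card_insert_of_notMem (he'Zbun cur (Ne.symm hf'cur))]
              exact hZcap
          · rw [bundle_update_ne Zc e' (some cur) g (fun hc => hg (Option.some.inj hc).symm)]
            exact ⟨fun d hd => (unNR Zc hZnr g).1 d (mem_of_mem_erase hd),
              le_trans card_erase_le (unNR Zc hZnr g).2⟩
        · -- Zcap at f'
          rw [bundle_update_ne Zc e' (some cur) f'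
              (fun hc => hf'cur (Option.some.inj hc).symm),
            card_erase_of_mem he'Zcf']
          have hb1 : 1 ≤ (bundle Zc f').card := card_pos.2 ⟨e', he'Zcf'⟩
          have hb2 := (unNR Zc hZnr f').2
          omega
        · -- Wnr
          intro g hg
          by_cases hgc : g = cur
          · rw [hgc, bundle_update_ne Wc e' (some f') cur
              (fun hc => hf'cur (Option.some.inj hc)), hvY cur hcur, hcap]
            apply (capped_eq_card_iff _ _ (hw cur) _).2
            refine ⟨fun d hd => hWcur.1 d (mem_of_mem_erase hd), ?_⟩
            rw [card_erase_of_mem he'Wcur]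
            have := hWcur.2
            omega
          · rw [bundle_update_ne Wc e' (some f') g (fun hc => hg (Option.some.inj hc).symm),
              erase_eq_of_notMem (he'Wbun g hgc)]
            exact hWnr g hgc
        · -- Wcur at f'
          have hWf'ch : (∀ d ∈ bundle Wc f', w f' d = 1) ∧ (bundle Wc f').card ≤ b f' := by
            have hthis := hWnr f' hf'cur
            rw [hvY f' hf'h, hcap] at hthis
            exact (capped_eq_card_iff _ _ (hw f') _).1 hthis
          rw [bundle_update_eq]
          refine ⟨?_, ?_⟩
          · intro d hd
            rcases mem_insert.1 hd with hd | hd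
            · rw [hd]; exact (hXch f').1 e' he'Xf'
            · exact hWf'ch.1 d hd
          · rw [card_insert_of_notMem (he'Wbun f' hf'cur)]
            have := hWcard f' hf'cur
            omega
        · -- Wcard
          intro g hg
          by_cases hgc : g = cur
          · rw [hgc, bundle_update_ne Wc e' (some f') cur
              (fun hc => hf'cur (Option.some.inj hc)), card_erase_of_mem he'Wcur]
            have := hWcur.2
            omega
          · rw [bundle_update_ne Wc e' (some f') g (fun hc => hg (Option.some.inj hc).symm),
              erase_eq_of_notMem (he'Wbun g hgc)]
            exact hWcard g hgc
        · -- K1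
          intro g hgh hgf
          by_cases hgc : g = cur
          · rw [hgc, card_insert_inter_of_mem he'used he'S,
              card_insert_inter_of_not_mem (fun hc => he'Xc (mem_sdiff.1 hc).1)]
            omega
          · rw [card_insert_inter_of_not_mem (fun hc => he'Ybun g hgc (mem_sdiff.1 hc).1),
              card_insert_inter_of_not_mem (fun hc => he'Xbun g hgf (mem_sdiff.1 hc).1)]
            exact K1 g hgh hgc
        · -- K2 at f'
          rw [card_insert_inter_of_not_mem (fun hc => he'Ybun f' hf'cur (mem_sdiff.1 hc).1),
            card_insert_inter_of_mem he'used (mem_sdiff.2 ⟨he'Xf', he'Ybun f' hf'cur⟩)]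
          have := K1 f' hf'h hf'cur
          omega
        · -- K3
          rw [card_insert_inter_of_not_mem he'pool,
            card_insert_inter_of_not_mem
              (fun hc => he'Xbun h (Ne.symm hf'h) (mem_sdiff.1 hc).1)]
          exact K3
  -- initial state: depart from h
  have hpoolpos : ((∅ : Finset (Fin m)) ∩ pool).card < pool.card := by
    rw [empty_inter]
    have hle : (bundle X h ∩ bundle Y h).card ≤ (bundle X h).card :=
      card_le_card inter_subset_left
    simp only [card_empty]
    omega
  obtain ⟨e1, he1pool, -⟩ := exists_not_mem_of_card_lt hpoolpos
  obtain ⟨f1, hXe1, hf1h, hZnr0, hZcap0, hWnr0, hWcur0, hWcard0⟩ := mkFresh e1 he1pool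
  obtain ⟨he1Y, he1w, he1Xh⟩ := pool_mem e1 he1pool
  have he1Ybun : ∀ g, g ≠ h → e1 ∉ bundle Y g := by
    intro g hg hc
    rw [mem_bundle] at hc
    rw [he1Y] at hc
    exact hg (Option.some.inj hc).symm
  have he1Xbun : ∀ g, g ≠ f1 → e1 ∉ bundle X g := by
    intro g hg hc
    rw [mem_bundle] at hc
    rw [hXe1] at hc
    exact hg (Option.some.inj hc).symm
  have he1Xf1 : e1 ∈ bundle X f1 := mem_bundle.2 hXe1
  refine loop (univ \ {e1}).card {e1} f1 {e1} (Function.update X e1 (some h))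
    (Function.update Y e1 (some f1)) rfl hf1h ⟨e1, mem_singleton_self _⟩
    (Finset.Subset.refl _) ?_ ?_ hZnr0 hZcap0 hWnr0 hWcur0 hWcard0 ?_ ?_ ?_
  · intro d hd
    have hde : d ≠ e1 := fun hc => hd (hc ▸ mem_singleton_self _)
    rw [Function.update_of_ne hde, Function.update_of_ne hde]
    exact ⟨rfl, rfl⟩
  · intro d hd
    rw [mem_singleton] at hd
    refine ⟨f1, h, ?_, ?_, ?_, ?_, hf1h⟩
    · rw [hd]; exact hXe1
    · rw [hd]; exact he1Y
    · rw [hd, Function.update_self]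
    · rw [hd, Function.update_self]
  · intro g hgh hgf
    rw [Finset.singleton_inter_of_notMem (fun hc => he1Ybun g hgh (mem_sdiff.1 hc).1),
      card_empty]
    exact Nat.zero_le _
  · rw [Finset.singleton_inter_of_notMem (fun hc => he1Ybun f1 hf1h (mem_sdiff.1 hc).1),
      Finset.singleton_inter_of_mem
        (mem_sdiff.2 ⟨he1Xf1, he1Ybun f1 hf1h⟩),
      card_empty, card_singleton]
    omega
  · rw [Finset.singleton_inter_of_mem he1pool,
      Finset.singleton_inter_of_notMem (fun hc => he1Xh (mem_sdiff.1 hc).1),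
      card_empty, card_singleton]

end master

/-- Corollary 3.6: the HWSD mechanism is (exactly) hospital-strategyproof when
hospitals have binary capped additive valuations. -/
theorem hwsd_hospital_sp_capped_additive {n m : ℕ} (v : Fin n → Finset (Fin m) → ℤ)
    (P : Fin m → Fin n → Fin n → Prop)
    (hv : ∀ h, IsBinaryCappedAdditive (v h)) (hP : ∀ d, IsStrictTotalOrder (Fin n) (P d))
    (h : Fin n) (v' : Finset (Fin m) → ℤ) (hv' : IsBinaryCappedAdditive v')
    (X Y : Fin m → Option (Fin n))
    (hX : IsHWSDOpt v P X) (hY : IsHWSDOpt (Function.update v h v') P Y) :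
    v h (bundle Y h) ≤ v h (bundle X h) := by
  classical
  choose b w hb hw hcap using hv
  obtain ⟨b', w', hb', hw', hcap'⟩ := hv'
  by_contra hcon
  push_neg at hcon
  rw [hX.1 h] at hcon
  rw [hcap h, sum_binary_eq (w h) (hw h)] at hcon
  have h1 : (bundle X h).card < b h := by
    have := lt_of_lt_of_le hcon (min_le_left _ _)
    exact_mod_cast this
  have h2 : (bundle X h).card < ((bundle Y h).filter (fun d => w h d = 1)).card := by
    have := lt_of_lt_of_le hcon (min_le_right _ _)
    exact_mod_cast this
  exact master hP hw hcap hw' hcap' hX hY h1 h2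
end
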